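/- Let S = (⊕_n S_n, σ, τ) be a frame. Then τ induces a ring isomorphism S/(t−1)S ≅ S_0, where t ∈ S_{-1} is the unique element with τ(t) = 1. In particular, the kernel of τ : S → S_0 is the ideal generated by t − 1. -/

import Mathlib

/-- A frame structure on a `ℤ`-graded commutative ring (see the paper of Daniels,
following Lau). -/
structure Frame (p : ℕ) (S : Type*) [CommRing S] (𝒜 : ℤ → AddSubgroup S)
    [GradedRing 𝒜] where
  σ : S →+* S
  τ : S →+* S
  σ_mem : ∀ s : S, σ s ∈ 𝒜 0
  τ_mem : ∀ s : S, τ s ∈ 𝒜 0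
  τ_id : ∀ s ∈ 𝒜 0, τ s = s
  τ_bij : ∀ n : ℕ, 1 ≤ n → Set.BijOn τ (𝒜 (-(n : ℤ)) : Set S) ((𝒜 0 : AddSubgroup S) : Set S)
  t : S
  t_mem : t ∈ 𝒜 (-1)
  τ_t : τ t = 1
  t_unique : ∀ t' ∈ 𝒜 (-1), τ t' = 1 → t' = t
  σ_frob : ∀ s ∈ 𝒜 0, σ s - s ^ p ∈ Ideal.span ({(p : S)} : Set S)
  σ_t : σ t = (p : S)
  p_rad : ∀ y ∈ 𝒜 0, ∃ z ∈ 𝒜 0, ((p : S) * y + 1) * z = 1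

section Aux

variable {p : ℕ} {S : Type*} [CommRing S] {𝒜 : ℤ → AddSubgroup S} [GradedRing 𝒜]

lemma Frame.t_pow_mem (F : Frame p S 𝒜) (n : ℕ) : F.t ^ n ∈ 𝒜 (-(n : ℤ)) := by
  have := SetLike.pow_mem_graded (A := 𝒜) n F.t_mem
  simpa using this

lemma Frame.tau_nonneg (F : Frame p S 𝒜) (n : ℕ) (x : S) (hx : x ∈ 𝒜 (n : ℤ)) :
    F.τ x = x * F.t ^ n := by
  have hmem : x * F.t ^ n ∈ 𝒜 0 := by
    have := SetLike.mul_mem_graded (A := 𝒜) hx (F.t_pow_mem n)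
    simpa using this
  have h1 : F.τ (x * F.t ^ n) = x * F.t ^ n := F.τ_id _ hmem
  have h2 : F.τ (x * F.t ^ n) = F.τ x := by
    rw [map_mul, map_pow, F.τ_t, one_pow, mul_one]
  rw [← h2, h1]

lemma Frame.tau_neg (F : Frame p S 𝒜) (n : ℕ) (hn : 1 ≤ n) (x : S)
    (hx : x ∈ 𝒜 (-(n : ℤ))) : x = F.τ x * F.t ^ n := by
  have hmem : F.τ x * F.t ^ n ∈ 𝒜 (-(n : ℤ)) := by
    have := SetLike.mul_mem_graded (A := 𝒜) (F.τ_mem x) (F.t_pow_mem n)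
    simpa using this
  have h2 : F.τ (F.τ x * F.t ^ n) = F.τ x := by
    rw [map_mul, map_pow, F.τ_t, one_pow, mul_one]
    exact F.τ_id _ (F.τ_mem x)
  exact (F.τ_bij n hn).injOn hx hmem h2.symm

lemma Frame.sub_tau_mem (F : Frame p S 𝒜) (s : S) :
    s - F.τ s ∈ Ideal.span ({F.t - 1} : Set S) := by
  induction s using DirectSum.Decomposition.inductionOn 𝒜 with
  | zero => simp
  | @homogeneous i m =>
    obtain ⟨x, hx⟩ := m
    rcases Int.eq_nat_or_neg i with ⟨n, rfl | rfl⟩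
    · rw [F.tau_nonneg n x hx]
      have hdvd : F.t - 1 ∣ x - x * F.t ^ n := by
        have : x - x * F.t ^ n = -x * (F.t ^ n - 1 ^ n) := by ring
        rw [this]
        exact Dvd.dvd.mul_left (sub_dvd_pow_sub_pow F.t 1 n) _
      exact Ideal.mem_span_singleton.mpr hdvd
    · rcases Nat.eq_zero_or_pos n with rfl | hn
      · have hx0 : x ∈ 𝒜 ((0 : ℕ) : ℤ) := by simpa using hx
        rw [F.tau_nonneg 0 x hx0]
        simp
      · have hx' := F.tau_neg n hn x hx
        have hdvd : F.t - 1 ∣ x - F.τ x := by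
          have : x - F.τ x = F.τ x * (F.t ^ n - 1 ^ n) := by
            nth_rewrite 1 [hx']; ring
          rw [this]
          exact Dvd.dvd.mul_left (sub_dvd_pow_sub_pow F.t 1 n) _
        exact Ideal.mem_span_singleton.mpr hdvd
  | add x y hx hy =>
    have := Ideal.add_mem _ hx hy
    have heq : x + y - F.τ (x + y) = (x - F.τ x) + (y - F.τ y) := by
      rw [map_add]; ring
    rw [heq]; exact this

end Aux

/-- For a frame `(S, σ, τ)`, the homomorphism `τ` induces a ring isomorphism
`S/(t − 1)S ≅ S₀`: its kernel is the ideal generated by `t − 1` and its image is `S₀`. -/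
theorem stmt_5 (p : ℕ) [Fact p.Prime] (S : Type*) [CommRing S]
    (𝒜 : ℤ → AddSubgroup S) [GradedRing 𝒜] (F : Frame p S 𝒜) :
    RingHom.ker F.τ = Ideal.span ({F.t - 1} : Set S) ∧
    Set.range F.τ = ((𝒜 0 : AddSubgroup S) : Set S) := by
  constructor
  · apply le_antisymm
    · intro s hs
      have h0 : F.τ s = 0 := hs
      have := F.sub_tau_mem s
      rwa [h0, sub_zero] at this
    · rw [Ideal.span_le]
      intro x hx
      rcases hx with rfl
      show F.τ (F.t - 1) = 0
      rw [map_sub, F.τ_t, map_one, sub_self]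
  · ext x
    constructor
    · rintro ⟨y, rfl⟩; exact F.τ_mem y
    · intro hx; exact ⟨x, F.τ_id x hx⟩
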